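/- Let p be an odd prime and let m be a positive integer such that p^a < m < p^{a+1} < 2m for some integer a ≥ 0. Then for every positive integer b, the integer n = m·p^b satisfies C(2n−1, n−1) ≢ 1 (mod n). -/

import Mathlib

theorem jones_holds_for_mpb (p : ℕ) (hp : p.Prime) (hodd : Odd p)
    (m : ℕ) (hm : 0 < m) (a : ℕ)
    (h1 : p ^ a < m) (h2 : m < p ^ (a + 1)) (h3 : p ^ (a + 1) < 2 * m)
    (b : ℕ) (hb : 0 < b) :
    ¬ (2 * (m * p ^ b) - 1).choose (m * p ^ b - 1) ≡ 1 [MOD m * p ^ b] := by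
  intro hmod
  set n := m * p ^ b with hn
  have hp1 : 1 < p := hp.one_lt
  have hnpos : 0 < n := Nat.mul_pos hm (pow_pos hp.pos b)
  -- n < p ^ (a + 1 + b)
  have hnlt : n < p ^ (a + 1 + b) := by
    rw [pow_add]
    exact (Nat.mul_lt_mul_right (pow_pos hp.pos b)).mpr h2
  -- p ^ (a + 1 + b) < 2 * n
  have h2n : p ^ (a + 1 + b) < 2 * n := by
    rw [pow_add, hn, ← mul_assoc]
    exact (Nat.mul_lt_mul_right (pow_pos hp.pos b)).mpr h3
  -- Kummer: p divides central binomial coefficient choose (2n) n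
  have hdvd2 : p ∣ (2 * n).choose n := by
    have hlog : a + 1 + b ≤ Nat.log p (2 * n) :=
      (Nat.le_log_iff_pow_le hp1 (by omega)).mpr h2n.le
    have hkey := Nat.Prime.emultiplicity_choose (p := p) (n := 2 * n) (k := n)
      (b := Nat.log p (2 * n) + 1) hp (by omega) (Nat.lt_succ_self _)
    have hmem : (a + 1 + b) ∈ Finset.filter
        (fun i => p ^ i ≤ n % p ^ i + (2 * n - n) % p ^ i)
        (Finset.Ico 1 (Nat.log p (2 * n) + 1)) := by
      refine Finset.mem_filter.mpr ⟨Finset.mem_Ico.mpr ⟨by omega, by omega⟩, ?_⟩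
      have h2nn : 2 * n - n = n := by omega
      rw [h2nn, Nat.mod_eq_of_lt hnlt]
      omega
    have hcard : 0 < (Finset.filter
        (fun i => p ^ i ≤ n % p ^ i + (2 * n - n) % p ^ i)
        (Finset.Ico 1 (Nat.log p (2 * n) + 1))).card :=
      Finset.card_pos.mpr ⟨_, hmem⟩
    have hle : (1 : ℕ∞) ≤ emultiplicity p ((2 * n).choose n) := by
      rw [hkey]
      exact_mod_cast hcard
    simpa using pow_dvd_of_le_emultiplicity hle
  -- 2 * choose (2n - 1) (n - 1) = choose (2n) n
  have hid : 2 * (2 * n - 1).choose (n - 1) = (2 * n).choose n := by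
    have h := Nat.add_one_mul_choose_eq (2 * n - 1) (n - 1)
    have e1 : 2 * n - 1 + 1 = 2 * n := by omega
    have e2 : n - 1 + 1 = n := by omega
    try simp only [Nat.succ_eq_add_one] at h
    rw [e1, e2] at h
    have : 2 * n * (2 * n - 1).choose (n - 1) = (2 * n).choose n * n := h
    have h' : 2 * (2 * n - 1).choose (n - 1) * n = (2 * n).choose n * n := by ring_nf; ring_nf at this; omega
    exact Nat.eq_of_mul_eq_mul_right hnpos h'
  have hdvd : p ∣ (2 * n - 1).choose (n - 1) := by
    rcases (hp.dvd_mul.mp (hid ▸ hdvd2)) with h | h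
    · exfalso
      have : p = 2 := (Nat.prime_dvd_prime_iff_eq hp Nat.prime_two).mp h
      rw [this] at hodd
      exact (Nat.not_odd_iff_even.mpr (by decide)) hodd
    · exact h
  -- p ∣ n, so the congruence mod n gives one mod p, contradiction
  have hpn : p ∣ n := Dvd.dvd.mul_left (dvd_pow_self p hb.ne') m
  have hmodp : (2 * n - 1).choose (n - 1) ≡ 1 [MOD p] := hmod.of_dvd hpn
  have h0 : (0 : ℕ) ≡ 1 [MOD p] := ((Nat.modEq_zero_iff_dvd).mpr hdvd).symm.trans hmodp
  have : p ∣ 1 := (Nat.modEq_zero_iff_dvd).mp h0.symm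
  exact hp.one_lt.ne' (Nat.eq_one_of_dvd_one this)
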